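/- (Fixed point characterizes reachability) Assume Q is a stateless effect summary of P, i.e., Q is stateless and Effects(T ∥ Q*) ⊆ Effects(Q*) for all threads T ∈ P. Let X be the least fixed point of X_0 = {(s_init, (T, emp)) : T ∈ P}, X_{i+1} = X_i ∪ post(X_i) ∪ env(X_i), where post applies one sequential step of the tracked thread and env replaces the shared heap s of a view (s, cf) by any s' obtainable by a single Q-step (s, cf_init(Q)) → (s', cf') such that (s', cf) is separated. Then the set of shared heaps occurring in X equals the union over T ∈ P of Reach(T ∥ Q*). -/

import Mathlib

namespace Paper

/-- Threads of the core language. -/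
inductive Thread (C : Type) : Type where
  | prim : C → Thread C
  | skip : Thread C
  | seq : Thread C → Thread C → Thread C
  | choice : Thread C → Thread C → Thread C
  | star : Thread C → Thread C
  | atomic : Thread C → Thread C

/-- Heaps: partial maps from variables and addresses to naturals. -/
abbrev Heap := (String ⊕ ℕ) → Option ℕ

def emp : Heap := fun _ => none

/-- Memory-cell (address) part of the domain of a heap. -/
def addrDom (h : Heap) : Set ℕ := {a | h (Sum.inr a) ≠ none}

/-- Disjointness on memory cells. -/
def Disj (h₁ h₂ : Heap) : Prop := addrDom h₁ ∩ addrDom h₂ = ∅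

abbrev Config (C : Type) := Thread C × Heap

/-- Thread-configuration maps (partial over thread identifiers). -/
abbrev Cf (C : Type) := ℕ → Option (Config C)

/-- A state (s, cf) is separated. -/
def Separated {C : Type} (s : Heap) (cf : Cf C) : Prop :=
  (∀ i c, cf i = some c → Disj s c.2) ∧
  (∀ i j ci cj, i ≠ j → cf i = some ci → cf j = some cj → Disj ci.2 cj.2)

variable {C : Type}

mutual
  /-- Sequential small-step semantics, parameterized by the semantics `prim`
  of primitive commands (relating shared/owned heaps before and after). -/
  inductive SeqStep (prim : C → Heap → Heap → Heap → Heap → Prop) :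
      Heap → Config C → Heap → Config C → Prop where
    | primStep {c s o s' o'} : prim c s o s' o' →
        SeqStep prim s (Thread.prim c, o) s' (Thread.skip, o')
    | seqL {s T₁ o s' T₁' o'} (T₂ : Thread C) :
        SeqStep prim s (T₁, o) s' (T₁', o') →
        SeqStep prim s (Thread.seq T₁ T₂, o) s' (Thread.seq T₁' T₂, o')
    | seqSkip {s o} (T : Thread C) :
        SeqStep prim s (Thread.seq Thread.skip T, o) s (T, o)
    | choiceL {s T₁ o s' T₁' o'} (T₂ : Thread C) :
        SeqStep prim s (T₁, o) s' (T₁', o') →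
        SeqStep prim s (Thread.choice T₁ T₂, o) s' (T₁', o')
    | choiceR {s T₂ o s' T₂' o'} (T₁ : Thread C) :
        SeqStep prim s (T₂, o) s' (T₂', o') →
        SeqStep prim s (Thread.choice T₁ T₂, o) s' (T₂', o')
    | starUnfold {s o} (T : Thread C) :
        SeqStep prim s (Thread.star T, o) s (Thread.seq T (Thread.star T), o)
    | starExit {s o} (T : Thread C) :
        SeqStep prim s (Thread.star T, o) s (Thread.skip, o)
    | atomic {s T o s' o'} :
        SeqSteps prim s (T, o) s' (Thread.skip, o') →
        SeqStep prim s (Thread.atomic T, o) s' (Thread.skip, o')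

  /-- Finitely many sequential steps. -/
  inductive SeqSteps (prim : C → Heap → Heap → Heap → Heap → Prop) :
      Heap → Config C → Heap → Config C → Prop where
    | refl {s c} : SeqSteps prim s c s c
    | step {s c s' c' s'' c''} : SeqStep prim s c s' c' →
        SeqSteps prim s' c' s'' c'' → SeqSteps prim s c s'' c''
end

variable (prim : C → Heap → Heap → Heap → Heap → Prop)

/-- Parallel (program) step: one thread steps sequentially and the
resulting state must be separated. -/
def ParStep (st st' : Heap × Cf C) : Prop :=
  ∃ i c c', st.2 i = some c ∧ SeqStep prim st.1 c st'.1 c' ∧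
    st'.2 = Function.update st.2 i (some c') ∧ Separated st'.1 st'.2

def ParSteps : Heap × Cf C → Heap × Cf C → Prop :=
  Relation.ReflTransGen (ParStep prim)

/-- A program is a parallel composition of finitely many threads. -/
abbrev Program (C : Type) := List (Thread C)

/-- `Q*` : Kleene star applied to every thread. -/
def starP (P : Program C) : Program C := P.map Thread.star

/-- Initial thread configurations: each thread with the empty owned heap. -/
def cfInit (P : Program C) : Cf C := fun i => (P[i]?).map fun T => (T, emp)

/-- Reachable shared heaps of a program from initial shared heap `sinit`. -/
def Reach (sinit : Heap) (P : Program C) : Set Heap :=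
  {s | ∃ cf, ParSteps prim (sinit, cfInit P) (s, cf)}

/-- Effects: single-step shared-heap updates along executions. -/
def Effects (sinit : Heap) (P : Program C) : Set (Heap × Heap) :=
  {p | ∃ cf cf', ParSteps prim (sinit, cfInit P) (p.1, cf) ∧
       ParStep prim (p.1, cf) (p.2, cf')}

/-- Statelessness: every thread of `Q`, from any shared heap reachable by `Q*`
with empty owned heap, steps in one step to `(skip, emp)`. -/
def Stateless (sinit : Heap) (Q : Program C) : Prop :=
  ∀ T ∈ Q, ∀ s ∈ Reach prim sinit (starP Q), ∀ s' c,
    SeqStep prim s (T, emp) s' c → c = (Thread.skip, emp)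

/-- Assumption 1: sequential steps preserve separation. -/
def PreservesSep : Prop :=
  ∀ s c s' c', SeqStep prim s c s' c' → Disj s c.2 → Disj s' c'.2

/-- `Q` is a stateless effect summary of `P`. -/
def IsSummary (sinit : Heap) (P Q : Program C) : Prop :=
  Stateless prim sinit Q ∧
  ∀ T ∈ P, Effects prim sinit (T :: starP Q) ⊆ Effects prim sinit (starP Q)

/-- Sequential-step successors of a set of views. -/
def post (X : Set (Heap × Config C)) : Set (Heap × Config C) :=
  {v' | ∃ v ∈ X, SeqStep prim v.1 v.2 v'.1 v'.2}

/-- Interference successors: replace the shared heap of a view by the result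
of one step of the summary `Q` from its initial configuration, subject to
separation of the resulting view. -/
def env (Q : Program C) (X : Set (Heap × Config C)) : Set (Heap × Config C) :=
  {v' | Disj v'.1 v'.2.2 ∧ ∃ s cf', (s, v'.2) ∈ X ∧
        ParStep prim (s, cfInit Q) (v'.1, cf')}

/-- Initial views. -/
def X₀ (sinit : Heap) (P : Program C) : Set (Heap × Config C) :=
  {v | v.1 = sinit ∧ ∃ T ∈ P, v.2 = (T, emp)}

/-- The least fixed point of the thread-modular analysis with interference
computed by the candidate summary `Q`. -/
def Fix (sinit : Heap) (P Q : Program C) : Set (Heap × Config C) :=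
  ⋂₀ {X | X₀ sinit P ⊆ X ∧ post prim X ⊆ X ∧ env prim Q X ⊆ X}

/-- Shared heaps occurring in the fixed point. -/
def FixHeaps (sinit : Heap) (P Q : Program C) : Set Heap :=
  {s | ∃ c, (s, c) ∈ Fix prim sinit P Q}

/-! ### Auxiliary lemmas -/

lemma addrDom_emp : addrDom emp = (∅ : Set ℕ) := by
  ext a; simp [addrDom, emp]

lemma disj_emp_right (h : Heap) : Disj h emp := by
  simp [Disj, addrDom_emp]

lemma disj_emp_left (h : Heap) : Disj emp h := by
  simp [Disj, addrDom_emp]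

/-- Separation holds when a tracked thread at index 0 is disjoint from the
shared heap and all other threads own the empty heap. -/
lemma sep_tracked (s : Heap) (cf : Cf C) (c : Config C)
    (h0 : cf 0 = some c) (hd : Disj s c.2)
    (henv : ∀ i ci, cf (i+1) = some ci → ci.2 = emp) : Separated s cf := by
  constructor
  · intro i ci hci
    cases i with
    | zero => rw [h0] at hci; injection hci with h; rw [← h]; exact hd
    | succ j => rw [henv j ci hci]; exact disj_emp_right s
  · intro i j ci cj hij hi hj
    cases j with
    | zero =>
      cases i with
      | zero => exact absurd rfl hij
      | succ k => rw [henv k ci hi]; exact disj_emp_left _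
    | succ k => rw [henv k cj hj]; exact disj_emp_right _

lemma sep_allEmp (s : Heap) (cf : Cf C)
    (h : ∀ i c, cf i = some c → c.2 = emp) : Separated s cf := by
  constructor
  · intro i c hc; rw [h i c hc]; exact disj_emp_right s
  · intro i j ci cj _ hi _; rw [h i ci hi]; exact disj_emp_left _

section Inversion

variable {prim : C → Heap → Heap → Heap → Heap → Prop}

lemma skip_no_step {s o s' c'} (h : SeqStep prim s (Thread.skip, o) s' c') :
    False := by
  cases h

lemma star_step_inv {s T o s' c'} (h : SeqStep prim s (Thread.star T, o) s' c') :
    s' = s ∧ (c' = (Thread.seq T (Thread.star T), o) ∨ c' = (Thread.skip, o)) := by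
  cases h with
  | starUnfold => exact ⟨rfl, Or.inl rfl⟩
  | starExit => exact ⟨rfl, Or.inr rfl⟩

lemma seq_step_inv {s T₁ T₂ o s' c'}
    (h : SeqStep prim s (Thread.seq T₁ T₂, o) s' c') :
    (∃ T₁' o', SeqStep prim s (T₁, o) s' (T₁', o') ∧
        c' = (Thread.seq T₁' T₂, o')) ∨
    (T₁ = Thread.skip ∧ s' = s ∧ c' = (T₂, o)) := by
  cases h with
  | seqL _ h => exact Or.inl ⟨_, _, h, rfl⟩
  | seqSkip => exact Or.inr ⟨rfl, rfl, rfl⟩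

end Inversion

section FixLemmas

variable {prim : C → Heap → Heap → Heap → Heap → Prop}
variable {sinit : Heap} {P Q : Program C}

lemma X0_subset_Fix : X₀ sinit P ⊆ Fix prim sinit P Q := by
  intro v hv X hX; exact hX.1 hv

lemma post_Fix_subset : post prim (Fix prim sinit P Q) ⊆ Fix prim sinit P Q := by
  intro v hv X hX
  obtain ⟨w, hw, hstep⟩ := hv
  exact hX.2.1 ⟨w, hw X hX, hstep⟩

lemma env_Fix_subset : env prim Q (Fix prim sinit P Q) ⊆ Fix prim sinit P Q := by
  intro v hv X hX
  obtain ⟨hd, s, cf', hmem, hstep⟩ := hv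
  exact hX.2.2 ⟨hd, s, cf', hmem X hX, hstep⟩

lemma Fix_subset {X : Set (Heap × Config C)}
    (h1 : X₀ sinit P ⊆ X) (h2 : post prim X ⊆ X) (h3 : env prim Q X ⊆ X) :
    Fix prim sinit P Q ⊆ X :=
  fun _ hv => hv X ⟨h1, h2, h3⟩

end FixLemmas

section Main

variable {prim : C → Heap → Heap → Heap → Heap → Prop}
variable {sinit : Heap} {P Q : Program C}

lemma cfInit_zero (T : Thread C) (L : Program C) :
    cfInit (T :: L) 0 = some (T, emp) := by
  simp [cfInit]

lemma cfInit_succ (T : Thread C) (L : Program C) (i : ℕ) :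
    cfInit (T :: L) (i+1) = (L[i]?).map fun T' => (T', emp) := by
  simp [cfInit]

lemma starP_getElem? (Q : Program C) (i : ℕ) :
    (starP Q)[i]? = (Q[i]?).map Thread.star := by
  simp [starP]

lemma mem_of_getElem? {L : Program C} {i : ℕ} {T : Thread C}
    (h : L[i]? = some T) : T ∈ L := by
  rw [List.getElem?_eq_some_iff] at h
  obtain ⟨h1, h2⟩ := h
  exact h2 ▸ List.getElem_mem h1

/-- Every shared heap reachable in `T ∥ Q*` is reachable in `Q*`,
by the effect-summary property. -/
lemma reach_in_starQ (hsum : IsSummary prim sinit P Q)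
    {T : Thread C} (hT : T ∈ P) {p : Heap × Cf C}
    (h : ParSteps prim (sinit, cfInit (T :: starP Q)) p) :
    p.1 ∈ Reach prim sinit (starP Q) := by
  induction h with
  | refl => exact ⟨_, Relation.ReflTransGen.refl⟩
  | @tail b c hsteps hstep _ =>
    have heff : ((b.1, c.1) : Heap × Heap) ∈ Effects prim sinit (T :: starP Q) :=
      ⟨b.2, c.2, hsteps, hstep⟩
    obtain ⟨cf₂, cf₂', hs, hst⟩ := hsum.2 T hT heff
    exact ⟨cf₂', hs.tail hst⟩

/-- Shapes an environment (summary) thread can take. -/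
def EnvShape (Tq : Thread C) (c : Config C) : Prop :=
  c.2 = emp ∧ (c.1 = Thread.star Tq ∨ c.1 = Thread.seq Tq (Thread.star Tq) ∨
    c.1 = Thread.seq Thread.skip (Thread.star Tq) ∨ c.1 = Thread.skip)

/-- Completeness of the fixed point: the tracked view of every reachable
state of `T ∥ Q*` is in `Fix`. -/
lemma fix_complete (hsum : IsSummary prim sinit P Q)
    {T : Thread C} (hT : T ∈ P) {p : Heap × Cf C}
    (h : ParSteps prim (sinit, cfInit (T :: starP Q)) p) :
    (∃ c, p.2 0 = some c ∧ (p.1, c) ∈ Fix prim sinit P Q) ∧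
    (∀ i c, p.2 (i+1) = some c → ∃ Tq, Q[i]? = some Tq ∧ EnvShape Tq c) := by
  induction h with
  | refl =>
    constructor
    · exact ⟨(T, emp), cfInit_zero T (starP Q),
        X0_subset_Fix ⟨rfl, T, hT, rfl⟩⟩
    · intro i c hc
      replace hc : cfInit (T :: starP Q) (i+1) = some c := hc
      rw [cfInit_succ, starP_getElem?] at hc
      cases hQ : Q[i]? with
      | none => rw [hQ] at hc; simp at hc
      | some Tq =>
        rw [hQ] at hc; simp at hc
        exact ⟨Tq, rfl, by rw [← hc]; exact ⟨rfl, Or.inl rfl⟩⟩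
  | @tail b c hsteps hstep ih =>
    obtain ⟨⟨c₀, hc0, hfix⟩, henv⟩ := ih
    obtain ⟨i, cc, cc', hcf, hseq, hupd, hsep⟩ := hstep
    cases i with
    | zero =>
      -- the tracked thread steps
      have hcc : cc = c₀ := by rw [hcf] at hc0; injection hc0
      refine ⟨⟨cc', by rw [hupd]; simp, ?_⟩, ?_⟩
      · exact post_Fix_subset ⟨(b.1, cc), by rw [hcc]; exact hfix, hseq⟩
      · intro j cj hcj
        rw [hupd] at hcj
        rw [Function.update_of_ne (by simp) _ _] at hcj
        exact henv j cj hcj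
    | succ j =>
      obtain ⟨Tq, hQ, hemp, hshape⟩ := henv j cc hcf
      have hc0' : c.2 0 = some c₀ := by
        rw [hupd]; rw [Function.update_of_ne (by simp) _ _]; exact hc0
      have henv' : ∀ k ck, c.2 (k+1) = some ck → k ≠ j →
          ∃ Tq', Q[k]? = some Tq' ∧ EnvShape Tq' ck := by
        intro k ck hck hkj
        rw [hupd, Function.update_of_ne (by simpa using hkj) _ _] at hck
        exact henv k ck hck
      obtain ⟨tcc, occ⟩ := cc
      simp only at hemp; subst hemp
      -- analyze the shape
      rcases hshape with hsh | hsh | hsh | hsh <;> simp only at hsh <;> subst hsh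
      · -- star Tq : shared heap unchanged
        obtain ⟨hs', hcc'⟩ := star_step_inv hseq
        refine ⟨⟨c₀, hc0', by rw [hs']; exact hfix⟩, ?_⟩
        intro k ck hck
        by_cases hkj : k = j
        · subst hkj
          rw [hupd, Function.update_self] at hck
          injection hck with hck
          refine ⟨Tq, hQ, ?_⟩
          rcases hcc' with h' | h' <;> rw [← hck, h']
          · exact ⟨rfl, Or.inr (Or.inl rfl)⟩
          · exact ⟨rfl, Or.inr (Or.inr (Or.inr rfl))⟩
        · exact henv' k ck hck hkj
      · -- seq Tq (star Tq) : a real summary step may happen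
        rcases seq_step_inv hseq with ⟨T₁', o', hin, hcc'⟩ | ⟨hT₁, hs', hcc'⟩
        · -- inner step of (Tq, emp): use statelessness and env-closure
          have hreach : b.1 ∈ Reach prim sinit (starP Q) :=
            reach_in_starQ hsum hT hsteps
          have hskip : ((T₁', o') : Config C) = (Thread.skip, emp) :=
            hsum.1 Tq (mem_of_getElem? hQ) b.1 hreach c.1 (T₁', o') hin
          injection hskip with h1 h2
          subst h1; subst h2
          refine ⟨⟨c₀, hc0', ?_⟩, ?_⟩
          · -- env closure
            refine env_Fix_subset ⟨?_, b.1,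
              Function.update (cfInit Q) j (some (Thread.skip, emp)), hfix, ?_⟩
            · exact hsep.1 0 c₀ hc0'
            · refine ⟨j, (Tq, emp), (Thread.skip, emp), ?_, hin, rfl, ?_⟩
              · simp [cfInit, hQ]
              · apply sep_allEmp
                intro k ck hck
                replace hck : Function.update (cfInit Q) j
                    (some (Thread.skip, emp)) k = some ck := hck
                by_cases hkj : k = j
                · subst hkj; rw [Function.update_self] at hck
                  injection hck with hck; rw [← hck]
                · rw [Function.update_of_ne hkj _ _] at hck
                  simp only [cfInit] at hck
                  cases hq : Q[k]? with
                  | none => rw [hq] at hck; simp at hck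
                  | some t => rw [hq] at hck; simp at hck; rw [← hck]
          · intro k ck hck
            by_cases hkj : k = j
            · subst hkj
              rw [hupd, Function.update_self] at hck
              injection hck with hck
              rw [← hck, hcc']
              exact ⟨Tq, hQ, rfl, Or.inr (Or.inr (Or.inl rfl))⟩
            · exact henv' k ck hck hkj
        · -- Tq = skip, seqSkip: shared heap unchanged
          refine ⟨⟨c₀, hc0', by rw [hs']; exact hfix⟩, ?_⟩
          intro k ck hck
          by_cases hkj : k = j
          · subst hkj
            rw [hupd, Function.update_self] at hck
            injection hck with hck
            rw [← hck, hcc']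
            exact ⟨Tq, hQ, rfl, Or.inl rfl⟩
          · exact henv' k ck hck hkj
      · -- seq skip (star Tq) : only seqSkip possible
        rcases seq_step_inv hseq with ⟨T₁', o', hin, _⟩ | ⟨_, hs', hcc'⟩
        · exact absurd hin skip_no_step
        · refine ⟨⟨c₀, hc0', by rw [hs']; exact hfix⟩, ?_⟩
          intro k ck hck
          by_cases hkj : k = j
          · subst hkj
            rw [hupd, Function.update_self] at hck
            injection hck with hck
            rw [← hck, hcc']
            exact ⟨Tq, hQ, rfl, Or.inl rfl⟩
          · exact henv' k ck hck hkj
      · -- skip: no step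
        exact absurd hseq skip_no_step

/-- Soundness witness set: views realizable by actual executions where all
environment threads sit at their initial `star` configuration. -/
def Good (prim : C → Heap → Heap → Heap → Heap → Prop)
    (sinit : Heap) (P Q : Program C) : Set (Heap × Config C) :=
  {v | ∃ T ∈ P, ∃ cf, ParSteps prim (sinit, cfInit (T :: starP Q)) (v.1, cf) ∧
        cf 0 = some v.2 ∧ Disj v.1 v.2.2 ∧
        ∀ i, cf (i+1) = (Q[i]?).map fun Tq => (Thread.star Tq, emp)}

lemma good_env_emp {cf : Cf C}
    (hcf : ∀ i, cf (i+1) = (Q[i]?).map fun Tq => (Thread.star Tq, emp)) :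
    ∀ i ci, cf (i+1) = some ci → ci.2 = emp := by
  intro i ci hci
  rw [hcf i] at hci
  cases hq : Q[i]? with
  | none => rw [hq] at hci; simp at hci
  | some t => rw [hq] at hci; simp at hci; rw [← hci]

lemma X0_subset_Good : X₀ sinit P ⊆ Good prim sinit P Q := by
  rintro ⟨s, c⟩ ⟨hs, T, hT, hc⟩
  simp only at hs hc; subst hs; subst hc
  refine ⟨T, hT, cfInit (T :: starP Q), Relation.ReflTransGen.refl,
    cfInit_zero T _, disj_emp_right _, ?_⟩
  intro i
  rw [cfInit_succ, starP_getElem?]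
  cases Q[i]? <;> simp

lemma post_subset_Good (hps : PreservesSep prim) :
    post prim (Good prim sinit P Q) ⊆ Good prim sinit P Q := by
  rintro ⟨s', c'⟩ ⟨⟨s, c⟩, ⟨T, hT, cf, hsteps, h0, hd, hcf⟩, hstep⟩
  simp only at hstep
  have hd' : Disj s' c'.2 := hps s c s' c' hstep hd
  refine ⟨T, hT, Function.update cf 0 (some c'), ?_, Function.update_self _ _ _,
    hd', ?_⟩
  · refine hsteps.tail ⟨0, c, c', h0, hstep, rfl, ?_⟩
    apply sep_tracked s' _ c' (Function.update_self _ _ _) hd'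
    intro i ci hci
    rw [Function.update_of_ne (by simp) _ _] at hci
    exact good_env_emp hcf i ci hci
  · intro i
    rw [Function.update_of_ne (by simp) _ _]
    exact hcf i

lemma env_subset_Good (hsum : IsSummary prim sinit P Q) :
    env prim Q (Good prim sinit P Q) ⊆ Good prim sinit P Q := by
  rintro ⟨s', c⟩ ⟨hd', s, cfq', ⟨T, hT, cf, hsteps, h0, hd, hcf⟩, hq⟩
  simp only at hd' hq ⊢
  obtain ⟨j, cq, cq', hcfq, hseqq, _, _⟩ := hq
  simp only [cfInit] at hcfq
  obtain ⟨Tq, hQ, hcq⟩ : ∃ Tq, Q[j]? = some Tq ∧ cq = (Tq, emp) := by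
    cases hq' : Q[j]? with
    | none => rw [hq'] at hcfq; simp at hcfq
    | some t => rw [hq'] at hcfq; simp at hcfq; exact ⟨t, rfl, hcfq.symm⟩
  subst hcq
  have hreach : s ∈ Reach prim sinit (starP Q) := reach_in_starQ hsum hT hsteps
  have hskip : cq' = (Thread.skip, emp) :=
    hsum.1 Tq (mem_of_getElem? hQ) s hreach s' cq' hseqq
  subst hskip
  -- simulate the summary step by three steps of the star thread j+1
  have hcfj : cf (j+1) = some (Thread.star Tq, emp) := by rw [hcf j, hQ]; rfl
  set cf1 : Cf C := Function.update cf (j+1)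
    (some (Thread.seq Tq (Thread.star Tq), emp)) with hcf1
  set cf2 : Cf C := Function.update cf1 (j+1)
    (some (Thread.seq Thread.skip (Thread.star Tq), emp)) with hcf2
  set cf3 : Cf C := Function.update cf2 (j+1)
    (some (Thread.star Tq, emp)) with hcf3
  have h01 : cf1 0 = some c := by
    rw [hcf1, Function.update_of_ne (by simp) _ _]; exact h0
  have h02 : cf2 0 = some c := by
    rw [hcf2, Function.update_of_ne (by simp) _ _]; exact h01
  have h03 : cf3 0 = some c := by
    rw [hcf3, Function.update_of_ne (by simp) _ _]; exact h02
  have henv1 : ∀ i ci, cf1 (i+1) = some ci → ci.2 = emp := by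
    intro i ci hci
    by_cases hij : i = j
    · subst hij; rw [hcf1, Function.update_self] at hci
      injection hci with h; rw [← h]
    · rw [hcf1, Function.update_of_ne (by simpa using hij) _ _] at hci
      exact good_env_emp hcf i ci hci
  have henv2 : ∀ i ci, cf2 (i+1) = some ci → ci.2 = emp := by
    intro i ci hci
    by_cases hij : i = j
    · subst hij; rw [hcf2, Function.update_self] at hci
      injection hci with h; rw [← h]
    · rw [hcf2, Function.update_of_ne (by simpa using hij) _ _] at hci
      exact henv1 i ci hci
  have henv3 : ∀ i ci, cf3 (i+1) = some ci → ci.2 = emp := by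
    intro i ci hci
    by_cases hij : i = j
    · subst hij; rw [hcf3, Function.update_self] at hci
      injection hci with h; rw [← h]
    · rw [hcf3, Function.update_of_ne (by simpa using hij) _ _] at hci
      exact henv2 i ci hci
  have step1 : ParStep prim (s, cf) (s, cf1) :=
    ⟨j+1, (Thread.star Tq, emp), (Thread.seq Tq (Thread.star Tq), emp),
      hcfj, SeqStep.starUnfold Tq, rfl, sep_tracked s cf1 c h01 hd henv1⟩
  have step2 : ParStep prim (s, cf1) (s', cf2) :=
    ⟨j+1, (Thread.seq Tq (Thread.star Tq), emp),
      (Thread.seq Thread.skip (Thread.star Tq), emp),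
      Function.update_self _ _ _,
      SeqStep.seqL (Thread.star Tq) hseqq, rfl,
      sep_tracked s' cf2 c h02 hd' henv2⟩
  have step3 : ParStep prim (s', cf2) (s', cf3) :=
    ⟨j+1, (Thread.seq Thread.skip (Thread.star Tq), emp),
      (Thread.star Tq, emp),
      Function.update_self _ _ _,
      SeqStep.seqSkip (Thread.star Tq), rfl,
      sep_tracked s' cf3 c h03 hd' henv3⟩
  refine ⟨T, hT, cf3, ((hsteps.tail step1).tail step2).tail step3, h03, hd', ?_⟩
  intro i
  by_cases hij : i = j
  · subst hij; rw [hcf3, Function.update_self, hQ]; rfl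
  · rw [hcf3, Function.update_of_ne (by simpa using hij) _ _,
      hcf2, Function.update_of_ne (by simpa using hij) _ _,
      hcf1, Function.update_of_ne (by simpa using hij) _ _]
    exact hcf i

end Main

/-- Fixed point characterizes reachability. -/
theorem fixed_point_reachset
    (hps : PreservesSep prim)
    (sinit : Heap) (P Q : Program C)
    (hsum : IsSummary prim sinit P Q) :
    FixHeaps prim sinit P Q =
      {s | ∃ T ∈ P, s ∈ Reach prim sinit (T :: starP Q)} := by
  ext s
  constructor
  · rintro ⟨c, hFix⟩
    have hGood : (s, c) ∈ Good prim sinit P Q :=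
      Fix_subset X0_subset_Good (post_subset_Good hps)
        (env_subset_Good hsum) hFix
    obtain ⟨T, hT, cf, hsteps, -, -, -⟩ := hGood
    exact ⟨T, hT, cf, hsteps⟩
  · rintro ⟨T, hT, cf, hsteps⟩
    obtain ⟨⟨c₀, -, hfix⟩, -⟩ :=
      fix_complete hsum hT (p := (s, cf)) hsteps
    exact ⟨c₀, hfix⟩

end Paper
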